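/- For every ν ∈ (1,2), every integer N ≥ 2, every 1 ≤ i ≤ N-1 and every 0 ≤ m ≤ N: g^{ν,N}_{i,i} < 0 and g^{ν,N}_{i,m} > 0 whenever m ≠ i. (Lemma 3.2, part (1).) -/

import Mathlib

/-- The coefficients `a^ν_{j,m}` of the second-order discretization of the left
Riemann–Liouville fractional derivative. All powers are real powers. -/
noncomputable def aCoef (ν : ℝ) (j m : ℕ) : ℝ :=
  if m = j then 1
  else if m = 0 then ((j : ℝ) - 1) ^ (3 - ν) - (j : ℝ) ^ (2 - ν) * ((j : ℝ) - 3 + ν)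
  else ((j : ℝ) - (m : ℝ) + 1) ^ (3 - ν) - 2 * ((j : ℝ) - (m : ℝ)) ^ (3 - ν)
    + ((j : ℝ) - (m : ℝ) - 1) ^ (3 - ν)

/-- The coefficients `b^ν_{j,m}` of the second-order discretization of the right
Riemann–Liouville fractional derivative on a grid with `N` subintervals. -/
noncomputable def bCoef (ν : ℝ) (N j m : ℕ) : ℝ :=
  if m = j then 1
  else if m = N then (3 - ν - (N : ℝ) + (j : ℝ)) * ((N : ℝ) - (j : ℝ)) ^ (2 - ν)
    + ((N : ℝ) - (j : ℝ) - 1) ^ (3 - ν)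
  else ((m : ℝ) - (j : ℝ) + 1) ^ (3 - ν) - 2 * ((m : ℝ) - (j : ℝ)) ^ (3 - ν)
    + ((m : ℝ) - (j : ℝ) - 1) ^ (3 - ν)

/-- The coefficients `p^ν_{i,m}` (left-derivative part), for `1 ≤ i ≤ N-1`. -/
noncomputable def pCoef (ν : ℝ) (i m : ℕ) : ℝ :=
  if m < i then aCoef ν (i - 1) m - 2 * aCoef ν i m + aCoef ν (i + 1) m
  else if m = i then -2 * aCoef ν i i + aCoef ν (i + 1) i
  else if m = i + 1 then aCoef ν (i + 1) (i + 1)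
  else 0

/-- The coefficients `q^ν_{i,m}` (right-derivative part), for `1 ≤ i ≤ N-1`. -/
noncomputable def qCoef (ν : ℝ) (N i m : ℕ) : ℝ :=
  if m + 1 < i then 0
  else if m + 1 = i then bCoef ν N (i - 1) (i - 1)
  else if m = i then -2 * bCoef ν N i i + bCoef ν N (i - 1) i
  else bCoef ν N (i - 1) m - 2 * bCoef ν N i m + bCoef ν N (i + 1) m

/-- The Riesz-derivative difference coefficients `g^{ν,N}_{i,m} = p^ν_{i,m} + q^ν_{i,m}`. -/
noncomputable def gCoef (ν : ℝ) (N i m : ℕ) : ℝ := pCoef ν i m + qCoef ν N i m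

/-- The L1 coefficients `l_s = (s+1)^(1-γ) - s^(1-γ)` of the Caputo discretization. -/
noncomputable def lCoef (γ : ℝ) (s : ℕ) : ℝ := ((s : ℝ) + 1) ^ (1 - γ) - (s : ℝ) ^ (1 - γ)

/-- The Riesz constant `κ_ν = 1 / (2 cos(νπ/2))`. -/
noncomputable def kappa (ν : ℝ) : ℝ := 1 / (2 * Real.cos (ν * Real.pi / 2))

/-- The maximum of `|v i|` over `0 ≤ i ≤ N`. -/
noncomputable def maxAbs (N : ℕ) (v : ℕ → ℝ) : ℝ :=
  (Finset.range (N + 1)).sup' Finset.nonempty_range_add_one fun i => |v i|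

/-- The maximum of `|v i j|` over `0 ≤ i ≤ Nx`, `0 ≤ j ≤ Ny`. -/
noncomputable def maxAbs2 (Nx Ny : ℕ) (v : ℕ → ℕ → ℝ) : ℝ :=
  ((Finset.range (Nx + 1)) ×ˢ (Finset.range (Ny + 1))).sup'
    (Finset.nonempty_range_add_one.product Finset.nonempty_range_add_one) fun p => |v p.1 p.2|

open Real Set Filter

noncomputable def Wf (s x : ℝ) : ℝ := (x + 1) ^ s - 2 * x ^ s + (x - 1) ^ s
noncomputable def Af (s x : ℝ) : ℝ := (x - 1) ^ s + (s - x) * x ^ (s - 1)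

lemma rpow_mvt (p : ℝ) {a b : ℝ} (ha : 0 < a) (hab : a < b) :
    ∃ c ∈ Set.Ioo a b, b ^ p - a ^ p = (b - a) * (p * c ^ (p - 1)) := by
  obtain ⟨c, hc, hc'⟩ := exists_hasDerivAt_eq_slope (fun x : ℝ => x ^ p)
    (fun x => p * x ^ (p - 1)) hab
    (fun x hx => (Real.hasDerivAt_rpow_const
      (Or.inl (ha.trans_le hx.1).ne')).continuousAt.continuousWithinAt)
    (fun x hx => Real.hasDerivAt_rpow_const (Or.inl (ha.trans hx.1).ne'))
  refine ⟨c, hc, ?_⟩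
  rw [eq_div_iff (by linarith : b - a ≠ 0)] at hc'
  linarith [hc']

lemma sd_rpow_pos {p x : ℝ} (hp : p < 0) (hx : 1 < x) :
    0 < (x + 1) ^ p - 2 * x ^ p + (x - 1) ^ p := by
  obtain ⟨c₁, hc₁, e₁⟩ := rpow_mvt p (by linarith : (0:ℝ) < x - 1) (by linarith : x - 1 < x)
  obtain ⟨c₂, hc₂, e₂⟩ := rpow_mvt p (by linarith : (0:ℝ) < x) (by linarith : x < x + 1)
  have h12 : c₁ < c₂ := hc₁.2.trans hc₂.1
  have h1 : 0 < c₁ := by have := hc₁.1; linarith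
  have hlt : c₂ ^ (p - 1) < c₁ ^ (p - 1) :=
    Real.rpow_lt_rpow_of_neg h1 h12 (by linarith)
  have hx1 : x - (x - 1) = 1 := by ring
  have hx2 : x + 1 - x = 1 := by ring
  rw [hx1] at e₁; rw [hx2] at e₂
  nlinarith

lemma key_A {p x : ℝ} (hp : p < 0) (hx : 1 < x) :
    (-p) * x ^ (p - 1) < (x - 1) ^ p - x ^ p := by
  obtain ⟨c, hc, e⟩ := rpow_mvt p (by linarith : (0:ℝ) < x - 1) (by linarith : x - 1 < x)
  have h1 : 0 < c := by have := hc.1; linarith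
  have hlt : x ^ (p - 1) < c ^ (p - 1) :=
    Real.rpow_lt_rpow_of_neg h1 hc.2 (by linarith)
  have hx1 : x - (x - 1) = 1 := by ring
  rw [hx1] at e
  nlinarith

lemma hasDerivAt_shift_rpow (c s : ℝ) {x : ℝ} (h : x + c ≠ 0) :
    HasDerivAt (fun y : ℝ => (y + c) ^ s) (s * (x + c) ^ (s - 1)) x := by
  have := ((hasDerivAt_id x).add_const c).rpow_const (p := s) (Or.inl h)
  simpa using this

lemma hasDerivAt_Wf (s : ℝ) {x : ℝ} (hx : 1 < x) :
    HasDerivAt (Wf s) (s * (x + 1) ^ (s - 1) - 2 * (s * x ^ (s - 1)) + s * (x - 1) ^ (s - 1)) x := by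
  have h1 := hasDerivAt_shift_rpow 1 s (by linarith : x + 1 ≠ 0)
  have h2 : HasDerivAt (fun y : ℝ => y ^ s) (s * x ^ (s - 1)) x :=
    Real.hasDerivAt_rpow_const (Or.inl (by linarith))
  have h3 := hasDerivAt_shift_rpow (-1) s (by linarith : x + -1 ≠ 0)
  have := (h1.sub (h2.const_mul 2)).add h3
  have hW : Wf s = fun y : ℝ => ((y + 1) ^ s - 2 * y ^ s) + (y + -1) ^ s := by
    funext y; simp only [Wf, sub_eq_add_neg]
  rw [hW]
  convert this using 1
  · rfl
  · rfl
  · rfl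
  rw [sub_eq_add_neg x 1]

noncomputable def Wf1 (s x : ℝ) : ℝ :=
  s * (x + 1) ^ (s - 1) - 2 * (s * x ^ (s - 1)) + s * (x - 1) ^ (s - 1)

lemma hasDerivAt_Wf1 (s : ℝ) {x : ℝ} (hx : 1 < x) :
    HasDerivAt (Wf1 s)
      (s * ((s - 1) * ((x + 1) ^ (s - 2) - 2 * x ^ (s - 2) + (x - 1) ^ (s - 2)))) x := by
  have h1 := (hasDerivAt_shift_rpow 1 (s - 1) (by linarith : x + 1 ≠ 0)).const_mul s
  have h2 : HasDerivAt (fun y : ℝ => y ^ (s - 1)) ((s - 1) * x ^ (s - 1 - 1)) x :=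
    Real.hasDerivAt_rpow_const (Or.inl (by linarith))
  have h3 := (hasDerivAt_shift_rpow (-1) (s - 1) (by linarith : x + -1 ≠ 0)).const_mul s
  have h4 := (h2.const_mul s).const_mul 2
  have := (h1.sub h4).add h3
  have hW : Wf1 s = fun y : ℝ =>
      (s * (y + 1) ^ (s - 1) - 2 * (s * y ^ (s - 1))) + s * (y + -1) ^ (s - 1) := by
    funext y; simp only [Wf1, sub_eq_add_neg]
  rw [hW]
  convert this using 1
  · rfl
  · rfl
  · rfl
  rw [show x + -1 = x - 1 by ring, show s - 1 - 1 = s - 2 by ring]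
  ring

lemma strictConvexOn_Wf {s : ℝ} (hs1 : 1 < s) (hs2 : s < 2) :
    StrictConvexOn ℝ (Set.Ici (1:ℝ)) (Wf s) := by
  apply strictConvexOn_of_deriv2_pos (convex_Ici 1)
  · apply Continuous.continuousOn
    have c1 : Continuous fun y : ℝ => (y + 1) ^ s :=
      (continuous_id.add continuous_const).rpow_const (fun x => Or.inr (by linarith))
    have c2 : Continuous fun y : ℝ => y ^ s :=
      continuous_id.rpow_const (fun x => Or.inr (by linarith))
    have c3 : Continuous fun y : ℝ => (y - 1) ^ s :=
      (continuous_id.sub continuous_const).rpow_const (fun x => Or.inr (by linarith))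
    unfold Wf
    exact (c1.sub (continuous_const.mul c2)).add c3
  · intro x hx
    rw [interior_Ici] at hx
    have hev : deriv (Wf s) =ᶠ[nhds x] Wf1 s := by
      filter_upwards [Ioi_mem_nhds hx] with y hy
      exact (hasDerivAt_Wf s hy).deriv
    have h2 : deriv (deriv (Wf s)) x = deriv (Wf1 s) x := hev.deriv_eq
    have : (deriv^[2] (Wf s)) x = deriv (deriv (Wf s)) x := rfl
    rw [this, h2, (hasDerivAt_Wf1 s hx).deriv]
    have := sd_rpow_pos (p := s - 2) (by linarith) hx
    have hs0 : (0:ℝ) < s := by linarith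
    exact mul_pos hs0 (mul_pos (by linarith) this)

noncomputable def Af1 (s x : ℝ) : ℝ :=
  s * (x - 1) ^ (s - 1) - x ^ (s - 1) + (s - x) * ((s - 1) * x ^ (s - 2))

lemma hasDerivAt_Af (s : ℝ) {x : ℝ} (hx : 1 < x) : HasDerivAt (Af s) (Af1 s x) x := by
  have hx0 : x ≠ 0 := by linarith
  have h1 : HasDerivAt (fun y : ℝ => (y - 1) ^ s) (s * (x - 1) ^ (s - 1)) x := by
    have := hasDerivAt_shift_rpow (-1) s (by linarith : x + -1 ≠ 0)
    have h : (fun y : ℝ => (y + -1) ^ s) = fun y : ℝ => (y - 1) ^ s := by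
      funext y; rw [sub_eq_add_neg]
    rw [h, show x + -1 = x - 1 by ring] at this
    exact this
  have hc : HasDerivAt (fun y : ℝ => s - y) (-1) x := by
    simpa using (hasDerivAt_id' x).const_sub s
  have hd : HasDerivAt (fun y : ℝ => y ^ (s - 1)) ((s - 1) * x ^ (s - 2)) x := by
    have := Real.hasDerivAt_rpow_const (x := x) (p := s - 1) (Or.inl hx0)
    rwa [show s - 1 - 1 = s - 2 by ring] at this
  have := h1.add (hc.mul hd)
  have hA : Af s = fun y : ℝ => (y - 1) ^ s + (s - y) * y ^ (s - 1) := rfl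
  rw [hA]
  convert this using 1
  · rfl
  · rfl
  · rfl
  simp only [Af1]; ring

lemma hasDerivAt_Af1 (s : ℝ) {x : ℝ} (hx : 1 < x) :
    HasDerivAt (Af1 s)
      (s * ((s - 1) * (x - 1) ^ (s - 2)) - (s - 1) * x ^ (s - 2)
        + (-((s - 1) * x ^ (s - 2)) + (s - x) * ((s - 1) * ((s - 2) * x ^ (s - 3))))) x := by
  have hx0 : x ≠ 0 := by linarith
  have h1 : HasDerivAt (fun y : ℝ => (y - 1) ^ (s - 1)) ((s - 1) * (x - 1) ^ (s - 2)) x := by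
    have := hasDerivAt_shift_rpow (-1) (s - 1) (by linarith : x + -1 ≠ 0)
    have h : (fun y : ℝ => (y + -1) ^ (s - 1)) = fun y : ℝ => (y - 1) ^ (s - 1) := by
      funext y; rw [sub_eq_add_neg y (1:ℝ)]
    rw [h, show x + -1 = x - 1 by ring, show s - 1 - 1 = s - 2 by ring] at this
    exact this
  have h2 : HasDerivAt (fun y : ℝ => y ^ (s - 1)) ((s - 1) * x ^ (s - 2)) x := by
    have := Real.hasDerivAt_rpow_const (x := x) (p := s - 1) (Or.inl hx0)
    rwa [show s - 1 - 1 = s - 2 by ring] at this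
  have h3 : HasDerivAt (fun y : ℝ => y ^ (s - 2)) ((s - 2) * x ^ (s - 3)) x := by
    have := Real.hasDerivAt_rpow_const (x := x) (p := s - 2) (Or.inl hx0)
    rwa [show s - 2 - 1 = s - 3 by ring] at this
  have hc : HasDerivAt (fun y : ℝ => s - y) (-1) x := by
    simpa using (hasDerivAt_id' x).const_sub s
  have := ((h1.const_mul s).sub h2).add (hc.mul (h3.const_mul (s - 1)))
  have hA : Af1 s = fun y : ℝ =>
      (s * (y - 1) ^ (s - 1) - y ^ (s - 1)) + (s - y) * ((s - 1) * y ^ (s - 2)) := rfl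
  rw [hA]
  convert this using 1
  · rfl
  · rfl
  · rfl
  ring

lemma strictConvexOn_Af {s : ℝ} (hs1 : 1 < s) (hs2 : s < 2) :
    StrictConvexOn ℝ (Set.Ici (1:ℝ)) (Af s) := by
  apply strictConvexOn_of_deriv2_pos (convex_Ici 1)
  · apply Continuous.continuousOn
    have c1 : Continuous fun y : ℝ => (y - 1) ^ s :=
      (continuous_id.sub continuous_const).rpow_const (fun x => Or.inr (by linarith))
    have c2 : Continuous fun y : ℝ => y ^ (s - 1) :=
      continuous_id.rpow_const (fun x => Or.inr (by linarith))
    exact c1.add ((continuous_const.sub continuous_id).mul c2)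
  · intro x hx
    rw [interior_Ici] at hx
    have hx0 : x ≠ 0 := ne_of_gt (by exact lt_trans one_pos hx)
    have hev : deriv (Af s) =ᶠ[nhds x] Af1 s := by
      filter_upwards [Ioi_mem_nhds hx] with y hy
      exact (hasDerivAt_Af s hy).deriv
    have h2 : deriv (deriv (Af s)) x = deriv (Af1 s) x := hev.deriv_eq
    have h0 : (deriv^[2] (Af s)) x = deriv (deriv (Af s)) x := rfl
    rw [h0, h2, (hasDerivAt_Af1 s hx).deriv]
    have hkey := key_A (p := s - 2) (by linarith) hx
    have hxx : x ^ (s - 2) = x ^ (s - 3) * x := by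
      rw [show s - 2 = s - 3 + 1 by ring]; exact Real.rpow_add_one hx0 _
    have hbr : 0 < (x - 1) ^ (s - 2) - x ^ (s - 2) - (2 - s) * x ^ (s - 3) := by
      rw [show s - 2 - 1 = s - 3 by ring] at hkey
      linarith
    have heq : s * ((s - 1) * (x - 1) ^ (s - 2)) - (s - 1) * x ^ (s - 2)
        + (-((s - 1) * x ^ (s - 2)) + (s - x) * ((s - 1) * ((s - 2) * x ^ (s - 3))))
        = (s - 1) * (s * ((x - 1) ^ (s - 2) - x ^ (s - 2) - (2 - s) * x ^ (s - 3))) := by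
      rw [hxx]; ring
    rw [heq]
    exact mul_pos (by linarith) (mul_pos (by linarith) hbr)

lemma sd_pos {f : ℝ → ℝ} (hf : StrictConvexOn ℝ (Set.Ici (1:ℝ)) f) {x : ℝ} (hx : 2 ≤ x) :
    0 < f (x - 1) - 2 * f x + f (x + 1) := by
  have h := hf.2 (show x - 1 ∈ Set.Ici (1:ℝ) by simp; linarith)
    (show x + 1 ∈ Set.Ici (1:ℝ) by simp; linarith)
    (by intro h; linarith [h]) (by norm_num : (0:ℝ) < 1/2) (by norm_num : (0:ℝ) < 1/2)
    (by norm_num)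
  have key : (1/2 : ℝ) • (x - 1) + (1/2 : ℝ) • (x + 1) = x := by
    simp only [smul_eq_mul]; ring
  rw [key] at h
  simp only [smul_eq_mul] at h
  linarith

lemma C1_pos {s : ℝ} (hs1 : 1 < s) (hs2 : s < 2) : 0 < (3:ℝ) ^ s - 4 * 2 ^ s + 7 := by
  set φ : ℝ → ℝ := fun t => (3:ℝ) ^ t - 4 * 2 ^ t + 7 with hφ
  have hd : ∀ t : ℝ, HasDerivAt φ ((3:ℝ) ^ t * Real.log 3 - 4 * ((2:ℝ) ^ t * Real.log 2)) t := by
    intro t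
    have h3 := (Real.hasStrictDerivAt_const_rpow (by norm_num : (0:ℝ) < 3) t).hasDerivAt
    have h2 := (Real.hasStrictDerivAt_const_rpow (by norm_num : (0:ℝ) < 2) t).hasDerivAt
    exact ((h3.sub (h2.const_mul 4)).add_const 7)
  have hderivneg : ∀ t ∈ Set.Ioo (1:ℝ) 2,
      (3:ℝ) ^ t * Real.log 3 - 4 * ((2:ℝ) ^ t * Real.log 2) < 0 := by
    intro t ht
    have hlog : 9 * Real.log 3 < 16 * Real.log 2 := by
      have := Real.log_lt_log (by norm_num : (0:ℝ) < 3 ^ (9:ℕ)) (by norm_num : (3:ℝ) ^ (9:ℕ) < 2 ^ (16:ℕ))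
      rwa [Real.log_pow, Real.log_pow] at this
    have hsplit : (3:ℝ) ^ t = (3/2 : ℝ) ^ t * 2 ^ t := by
      rw [← Real.mul_rpow (by norm_num) (by norm_num)]; norm_num
    have hlt : ((3:ℝ)/2) ^ t < 9/4 := by
      have := Real.rpow_lt_rpow_of_exponent_lt (by norm_num : (1:ℝ) < 3/2) ht.2
      have h2 : ((3:ℝ)/2) ^ (2:ℝ) = 9/4 := by
        rw [show (2:ℝ) = ((2:ℕ):ℝ) by norm_num, Real.rpow_natCast]; norm_num
      linarith [h2 ▸ this]
    have h2pos : (0:ℝ) < 2 ^ t := Real.rpow_pos_of_pos (by norm_num) t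
    have hlog3 : (0:ℝ) < Real.log 3 := Real.log_pos (by norm_num)
    rw [hsplit]
    have ha : (3/2:ℝ) ^ t * Real.log 3 < (9/4) * Real.log 3 := by nlinarith
    have hb : (9/4:ℝ) * Real.log 3 < 4 * Real.log 2 := by linarith
    have hc := mul_lt_mul_of_pos_right (ha.trans hb) h2pos
    nlinarith [hc]
  have hanti : StrictAntiOn φ (Set.Icc (1:ℝ) 2) := by
    apply strictAntiOn_of_deriv_neg (convex_Icc 1 2)
    · exact Continuous.continuousOn (by
        exact ((continuous_const.rpow continuous_id (fun _ => Or.inl (by norm_num))).sub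
          (continuous_const.mul (continuous_const.rpow continuous_id (fun _ => Or.inl (by norm_num))))).add
          continuous_const)
    · intro t ht
      rw [interior_Icc] at ht
      rw [(hd t).deriv]
      exact hderivneg t ht
  have h2mem : (2:ℝ) ∈ Set.Icc (1:ℝ) 2 := by norm_num
  have hsmem : s ∈ Set.Icc (1:ℝ) 2 := ⟨le_of_lt hs1, le_of_lt hs2⟩
  have := hanti hsmem h2mem hs2
  have hφ2 : φ 2 = 0 := by
    simp only [hφ]
    rw [show (2:ℝ) = ((2:ℕ):ℝ) by norm_num, Real.rpow_natCast, Real.rpow_natCast]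
    norm_num
  simpa [hφ2] using this

lemma C2_pos {s : ℝ} (hs1 : 1 < s) (hs2 : s < 2) :
    0 < 5 - 2 * s + (s - 2) * 2 ^ (s - 1) := by
  have h1 : (2:ℝ) ^ (s - 1) < 2 := by
    have := Real.rpow_lt_rpow_of_exponent_lt (by norm_num : (1:ℝ) < 2)
      (by linarith : s - 1 < 1)
    rwa [Real.rpow_one] at this
  have h2 : (0:ℝ) < 2 ^ (s - 1) := Real.rpow_pos_of_pos (by norm_num) _
  nlinarith

lemma Wf_one {s : ℝ} (hs : s ≠ 0) : Wf s 1 = 2 ^ s - 2 := by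
  simp [Wf, Real.zero_rpow hs, Real.one_rpow]; norm_num

lemma Wf_two (s : ℝ) : Wf s 2 = 3 ^ s - 2 * 2 ^ s + 1 := by
  simp [Wf, Real.one_rpow]; norm_num

lemma Af_one {s : ℝ} (hs : s ≠ 0) : Af s 1 = s - 1 := by
  simp [Af, Real.zero_rpow hs, Real.one_rpow]

lemma Af_two (s : ℝ) : Af s 2 = 1 + (s - 2) * 2 ^ (s - 1) := by
  simp [Af, Real.one_rpow]; norm_num

lemma aCoef_diag (ν : ℝ) (j : ℕ) : aCoef ν j j = 1 := by rw [aCoef, if_pos rfl]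

lemma bCoef_diag (ν : ℝ) (N j : ℕ) : bCoef ν N j j = 1 := by rw [bCoef, if_pos rfl]

lemma aCoef_W (ν : ℝ) {j m : ℕ} (h1 : 1 ≤ m) (h2 : m < j) :
    aCoef ν j m = Wf (3 - ν) ((j : ℝ) - (m : ℝ)) := by
  rw [aCoef, if_neg (by omega), if_neg (by omega)]; rfl

lemma aCoef_zero (ν : ℝ) {j : ℕ} (hj : 1 ≤ j) : aCoef ν j 0 = Af (3 - ν) (j : ℝ) := by
  rw [aCoef, if_neg (by omega), if_pos rfl, Af,
    show (2:ℝ) - ν = 3 - ν - 1 by ring]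
  ring

lemma bCoef_N (ν : ℝ) {N j : ℕ} (hj : j < N) :
    bCoef ν N j N = Af (3 - ν) ((N : ℝ) - (j : ℝ)) := by
  rw [bCoef, if_neg (by omega), if_pos rfl, Af, show (2:ℝ) - ν = 3 - ν - 1 by ring]
  ring

lemma bCoef_W (ν : ℝ) {N j m : ℕ} (h1 : j < m) (h2 : m < N) :
    bCoef ν N j m = Wf (3 - ν) ((m : ℝ) - (j : ℝ)) := by
  rw [bCoef, if_neg (by omega), if_neg (by omega)]; rfl

/-- Lemma 3.2, part (1): for `ν ∈ (1,2)`, the diagonal Riesz coefficient is negative and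
all off-diagonal coefficients are positive. -/
theorem gCoef_diag_neg_offdiag_pos (ν : ℝ) (hν : ν ∈ Set.Ioo (1:ℝ) 2)
    (N : ℕ) (hN : 2 ≤ N) (i : ℕ) (hi1 : 1 ≤ i) (hi2 : i ≤ N - 1) :
    gCoef ν N i i < 0 ∧ ∀ m : ℕ, m ≤ N → m ≠ i → 0 < gCoef ν N i m := by
  obtain ⟨hν1, hν2⟩ := hν
  have hs1 : 1 < 3 - ν := by linarith
  have hs2 : 3 - ν < 2 := by linarith
  have hsne : 3 - ν ≠ 0 := by intro h; linarith [h]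
  have hiN : i < N := by omega
  have hci : ((i - 1 : ℕ) : ℝ) = (i : ℝ) - 1 := by
    rw [Nat.cast_sub hi1, Nat.cast_one]
  constructor
  · rw [gCoef, pCoef, if_neg (lt_irrefl i), if_pos rfl, qCoef, if_neg (by omega),
      if_neg (by omega), if_pos rfl, aCoef_diag, bCoef_diag,
      aCoef_W ν hi1 (by omega), bCoef_W ν (by omega) hiN,
      show ((i + 1 : ℕ) : ℝ) - (i : ℝ) = 1 by push_cast; ring,
      show (i : ℝ) - ((i - 1 : ℕ) : ℝ) = 1 by rw [hci]; ring, Wf_one hsne]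
    have h2lt4 : (2:ℝ) ^ (3 - ν) < 4 := by
      have := Real.rpow_lt_rpow_of_exponent_lt (by norm_num : (1:ℝ) < 2) hs2
      rw [show (2:ℝ) = ((2:ℕ):ℝ) by norm_num, Real.rpow_natCast] at this
      norm_num at this
      convert this using 2
    linarith
  · intro m hmN hmne
    rcases lt_or_gt_of_ne hmne with hlt | hgt
    · -- m < i
      by_cases hm0 : m = 0
      · subst hm0
        by_cases hieq : i = 1
        · subst hieq
          rw [gCoef, pCoef, if_pos (by omega), qCoef, if_neg (by omega), if_pos rfl,
            show (1 - 1 : ℕ) = 0 by rfl, aCoef_diag, bCoef_diag,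
            aCoef_zero ν (by omega : 1 ≤ 1), aCoef_zero ν (by omega : 1 ≤ 1 + 1),
            Nat.cast_one, show ((1 + 1 : ℕ) : ℝ) = 2 by norm_num,
            Af_one hsne, Af_two]
          linarith [C2_pos hs1 hs2]
        · have hi2' : 2 ≤ i := by omega
          rw [gCoef, pCoef, if_pos (by omega), qCoef, if_pos (by omega),
            aCoef_zero ν (by omega : 1 ≤ i - 1), aCoef_zero ν (by omega : 1 ≤ i),
            aCoef_zero ν (by omega : 1 ≤ i + 1), hci,
            show ((i + 1 : ℕ) : ℝ) = (i : ℝ) + 1 by push_cast; ring]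
          have hx : (2:ℝ) ≤ (i : ℝ) := by exact_mod_cast hi2'
          have := sd_pos (strictConvexOn_Af hs1 hs2) hx
          linarith
      · have hm1 : 1 ≤ m := by omega
        by_cases hieq : i = m + 1
        · subst hieq
          rw [gCoef, pCoef, if_pos (by omega), qCoef, if_neg (by omega), if_pos rfl,
            Nat.add_sub_cancel, aCoef_diag, bCoef_diag,
            aCoef_W ν hm1 (by omega), aCoef_W ν hm1 (by omega),
            show ((m + 1 : ℕ) : ℝ) - (m : ℝ) = 1 by push_cast; ring,
            show ((m + 1 + 1 : ℕ) : ℝ) - (m : ℝ) = 2 by push_cast; ring,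
            Wf_one hsne, Wf_two]
          linarith [C1_pos hs1 hs2]
        · have hm2 : m + 2 ≤ i := by omega
          rw [gCoef, pCoef, if_pos (by omega), qCoef, if_pos (by omega),
            aCoef_W ν hm1 (by omega), aCoef_W ν hm1 (by omega), aCoef_W ν hm1 (by omega),
            hci, show ((i + 1 : ℕ) : ℝ) = (i : ℝ) + 1 by push_cast; ring]
          have hx : (2:ℝ) ≤ (i : ℝ) - (m : ℝ) := by
            have : ((m : ℝ) + 2) ≤ (i : ℝ) := by exact_mod_cast hm2
            linarith
          have := sd_pos (strictConvexOn_Wf hs1 hs2) hx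
          rw [show (i : ℝ) - 1 - (m : ℝ) = (i : ℝ) - (m : ℝ) - 1 by ring,
            show (i : ℝ) + 1 - (m : ℝ) = (i : ℝ) - (m : ℝ) + 1 by ring]
          linarith
    · -- i < m
      by_cases hmN' : m = N
      · rw [hmN']
        by_cases hNi : N = i + 1
        · subst hNi
          rw [gCoef, pCoef, if_neg (by omega), if_neg (by omega), if_pos rfl, aCoef_diag,
            qCoef, if_neg (by omega), if_neg (by omega), if_neg (by omega), bCoef_diag,
            bCoef_N ν (by omega : i < i + 1), bCoef_N ν (by omega : i - 1 < i + 1),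
            show ((i + 1 : ℕ) : ℝ) - (i : ℝ) = 1 by push_cast; ring,
            show ((i + 1 : ℕ) : ℝ) - ((i - 1 : ℕ) : ℝ) = 2 by rw [hci]; push_cast; ring,
            Af_one hsne, Af_two]
          linarith [C2_pos hs1 hs2]
        · have hN2 : i + 2 ≤ N := by omega
          rw [gCoef, pCoef, if_neg (by omega), if_neg (by omega), if_neg (by omega),
            qCoef, if_neg (by omega), if_neg (by omega), if_neg (by omega),
            bCoef_N ν (by omega : i - 1 < N), bCoef_N ν (by omega : i < N),
            bCoef_N ν (by omega : i + 1 < N),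
            hci, show ((i + 1 : ℕ) : ℝ) = (i : ℝ) + 1 by push_cast; ring]
          have hx : (2:ℝ) ≤ (N : ℝ) - (i : ℝ) := by
            have : ((i : ℝ) + 2) ≤ (N : ℝ) := by exact_mod_cast hN2
            linarith
          have := sd_pos (strictConvexOn_Af hs1 hs2) hx
          rw [show (N : ℝ) - ((i : ℝ) - 1) = (N : ℝ) - (i : ℝ) + 1 by ring,
            show (N : ℝ) - ((i : ℝ) + 1) = (N : ℝ) - (i : ℝ) - 1 by ring]
          linarith
      · have hmN2 : m < N := by omega
        by_cases hmi1 : m = i + 1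
        · subst hmi1
          rw [gCoef, pCoef, if_neg (by omega), if_neg (by omega), if_pos rfl, aCoef_diag,
            qCoef, if_neg (by omega), if_neg (by omega), if_neg (by omega), bCoef_diag,
            bCoef_W ν (by omega : i < i + 1) hmN2, bCoef_W ν (by omega : i - 1 < i + 1) hmN2,
            show ((i + 1 : ℕ) : ℝ) - (i : ℝ) = 1 by push_cast; ring,
            show ((i + 1 : ℕ) : ℝ) - ((i - 1 : ℕ) : ℝ) = 2 by rw [hci]; push_cast; ring,
            Wf_one hsne, Wf_two]
          linarith [C1_pos hs1 hs2]
        · have hm2 : i + 2 ≤ m := by omega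
          rw [gCoef, pCoef, if_neg (by omega), if_neg (by omega), if_neg (by omega),
            qCoef, if_neg (by omega), if_neg (by omega), if_neg (by omega),
            bCoef_W ν (by omega : i - 1 < m) hmN2, bCoef_W ν (by omega : i < m) hmN2,
            bCoef_W ν (by omega : i + 1 < m) hmN2,
            hci, show ((i + 1 : ℕ) : ℝ) = (i : ℝ) + 1 by push_cast; ring]
          have hx : (2:ℝ) ≤ (m : ℝ) - (i : ℝ) := by
            have : ((i : ℝ) + 2) ≤ (m : ℝ) := by exact_mod_cast hm2
            linarith
          have := sd_pos (strictConvexOn_Wf hs1 hs2) hx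
          rw [show (m : ℝ) - ((i : ℝ) - 1) = (m : ℝ) - (i : ℝ) + 1 by ring,
            show (m : ℝ) - ((i : ℝ) + 1) = (m : ℝ) - (i : ℝ) - 1 by ring]
          linarith
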